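/- Let G₃ = G₁ *_{G₀} G₂ be an amalgamated free product. For subgroups A ≤ G₁ and B ≤ G₂ with A ∩ G₀ = B ∩ G₀ = C, let H = ⟨A ∪ B⟩ ≤ G₃. Then H ∩ G₁ = A and H ∩ G₂ = B. -/

import Mathlib

namespace AmalgamAux

open Monoid CoprodI PushoutI Subgroup

variable {ι : Type} {G : ι → Type} [∀ i, Group (G i)] {K : Type} [Group K]
  {φ : ∀ i, K →* G i}

/-- An element of the pushout is "good" if it can be written as a reduced word with
letters in the subgroups `A i`, times a base element of `C`. -/
def Good (φ : ∀ i, K →* G i) (A : ∀ i, Subgroup (G i)) (C : Subgroup K)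
    (x : PushoutI φ) : Prop :=
  ∃ (w : CoprodI.Word G) (c : K), Reduced φ w ∧ (∀ l ∈ w.toList, l.2 ∈ A l.1) ∧ c ∈ C ∧
    x = ofCoprodI w.prod * base φ c

theorem toList_cons {i : ι} (m : G i) (w : Word G) (h1 : w.fstIdx ≠ some i) (h2 : m ≠ 1) :
    (Word.cons m w h1 h2).toList = ⟨i, m⟩ :: w.toList := rfl

theorem good_one (A : ∀ i, Subgroup (G i)) (C : Subgroup K) : Good φ A C 1 :=
  ⟨.empty, 1, by intro g hg; simp [Word.empty] at hg, by simp [Word.empty],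
    one_mem _, by simp⟩

theorem base_mul_good {A : ∀ i, Subgroup (G i)} {C : Subgroup K}
    (hAC : ∀ i (k : K), φ i k ∈ A i ↔ k ∈ C)
    {c' : K} (hc' : c' ∈ C) :
    ∀ (w : Word G), Reduced φ w → (∀ l ∈ w.toList, l.2 ∈ A l.1) → ∀ c ∈ C,
      Good φ A C (base φ c' * (ofCoprodI w.prod * base φ c)) := by
  intro w
  induction w using Word.consRecOn with
  | empty =>
    intro _ _ c hc
    refine ⟨.empty, c' * c, by intro g hg; simp [Word.empty] at hg, by simp [Word.empty],
      mul_mem hc' hc, ?_⟩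
    simp [← mul_assoc, ← map_mul]
  | cons i m w h1 h2 _ =>
    intro hred hmem c hc
    have hm_nr : m ∉ (φ i).range := hred ⟨i, m⟩ List.mem_cons_self
    have hmr' : (φ i c' * m) ∉ (φ i).range := by
      rintro ⟨y, hy⟩
      exact hm_nr ⟨c'⁻¹ * y, by rw [map_mul, hy, map_inv, ← mul_assoc, inv_mul_cancel, one_mul]⟩
    have hne : φ i c' * m ≠ 1 := by
      intro h; exact hmr' (h ▸ ⟨1, by simp [h]⟩)
    refine ⟨Word.cons (φ i c' * m) w h1 hne, c, ?_, ?_, hc, ?_⟩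
    · intro g hg
      rw [toList_cons, List.mem_cons] at hg
      rcases hg with rfl | hg
      · exact hmr'
      · exact hred g (by rw [toList_cons]; exact List.mem_cons_of_mem _ hg)
    · intro g hg
      rw [toList_cons, List.mem_cons] at hg
      rcases hg with rfl | hg
      · exact mul_mem ((hAC i c').2 hc') (hmem ⟨i, m⟩ List.mem_cons_self)
      · exact hmem g (by rw [toList_cons]; exact List.mem_cons_of_mem _ hg)
    · rw [Word.prod_cons, Word.prod_cons, map_mul, map_mul, ofCoprodI_of, ofCoprodI_of,
        map_mul, ← of_apply_eq_base φ i c']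
      simp [mul_assoc]

theorem of_mul_good {A : ∀ i, Subgroup (G i)} {C : Subgroup K}
    (hAC : ∀ i (k : K), φ i k ∈ A i ↔ k ∈ C)
    {i : ι} {a : G i} (ha : a ∈ A i) {x : PushoutI φ} (hx : Good φ A C x) :
    Good φ A C (of i a * x) := by
  obtain ⟨w, c, hred, hmem, hc, rfl⟩ := hx
  by_cases har : a ∈ (φ i).range
  · obtain ⟨c', rfl⟩ := har
    rw [of_apply_eq_base]
    exact base_mul_good hAC ((hAC i c').1 ha) w hred hmem c hc
  · have ha1 : a ≠ 1 := by rintro rfl; exact har ⟨1, map_one _⟩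
    induction w using Word.consRecOn with
    | empty =>
      refine ⟨Word.cons a .empty (fun h => Option.some_ne_none i h.symm) ha1, c, ?_, ?_, hc, ?_⟩
      · intro g hg
        rw [toList_cons, List.mem_cons] at hg
        rcases hg with rfl | hg
        · exact har
        · simp [Word.empty] at hg
      · intro g hg
        rw [toList_cons, List.mem_cons] at hg
        rcases hg with rfl | hg
        · exact ha
        · simp [Word.empty] at hg
      · rw [Word.prod_cons]
        simp [ofCoprodI_of, mul_assoc]
    | cons j m w h1 h2 _ =>
      have hm_nr : m ∉ (φ j).range := hred ⟨j, m⟩ List.mem_cons_self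
      by_cases hji : j = i
      · subst hji
        by_cases ham : a * m ∈ (φ j).range
        · obtain ⟨c'', hc''⟩ := ham
          have hc''C : c'' ∈ C := (hAC j c'').1 (by
            rw [hc'']; exact mul_mem ha (hmem ⟨j, m⟩ List.mem_cons_self))
          have heq : of j a * (ofCoprodI (Word.cons m w h1 h2).prod * base φ c)
              = base φ c'' * (ofCoprodI w.prod * base φ c) := by
            rw [Word.prod_cons, map_mul, ofCoprodI_of, ← mul_assoc, ← mul_assoc, ← map_mul,
              ← hc'', of_apply_eq_base, mul_assoc]
          rw [heq]
          exact base_mul_good hAC hc''C w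
            (fun g hg => hred g (by rw [toList_cons]; exact List.mem_cons_of_mem _ hg))
            (fun g hg => hmem g (by rw [toList_cons]; exact List.mem_cons_of_mem _ hg)) c hc
        · have hne : a * m ≠ 1 := by rintro h; exact ham (h ▸ ⟨1, by simp [h]⟩)
          refine ⟨Word.cons (a * m) w h1 hne, c, ?_, ?_, hc, ?_⟩
          · intro g hg
            rw [toList_cons, List.mem_cons] at hg
            rcases hg with rfl | hg
            · exact ham
            · exact hred g (by rw [toList_cons]; exact List.mem_cons_of_mem _ hg)
          · intro g hg
            rw [toList_cons, List.mem_cons] at hg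
            rcases hg with rfl | hg
            · exact mul_mem ha (hmem ⟨j, m⟩ List.mem_cons_self)
            · exact hmem g (by rw [toList_cons]; exact List.mem_cons_of_mem _ hg)
          · rw [Word.prod_cons, Word.prod_cons, map_mul, map_mul, ofCoprodI_of, ofCoprodI_of,
              map_mul]
            simp [mul_assoc]
      · -- different indices: just prepend
        refine ⟨Word.cons a (Word.cons m w h1 h2)
          (by rw [Word.fstIdx_cons]; simpa using hji) ha1, c, ?_, ?_, hc, ?_⟩
        · intro g hg
          rw [toList_cons, List.mem_cons] at hg
          rcases hg with rfl | hg
          · exact har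
          · exact hred g hg
        · intro g hg
          rw [toList_cons, List.mem_cons] at hg
          rcases hg with rfl | hg
          · exact ha
          · exact hmem g hg
        · simp only [Word.prod_cons, map_mul, ofCoprodI_of, mul_assoc]

theorem good_of_mem_closure {A : ∀ i, Subgroup (G i)} {C : Subgroup K}
    (hAC : ∀ i (k : K), φ i k ∈ A i ↔ k ∈ C) {x : PushoutI φ}
    (hx : x ∈ Subgroup.closure (⋃ j, ((of j : G j →* PushoutI φ) '' (A j) : Set (PushoutI φ)))) :
    Good φ A C x := by
  induction hx using Subgroup.closure_induction_left with
  | one => exact good_one A C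
  | mul_left g hg y hy ih =>
    obtain ⟨j, hj⟩ := Set.mem_iUnion.1 hg
    obtain ⟨a, ha, rfl⟩ := hj
    exact of_mul_good hAC ha ih
  | inv_mul_cancel g hg y hy ih =>
    obtain ⟨j, hj⟩ := Set.mem_iUnion.1 hg
    obtain ⟨a, ha, rfl⟩ := hj
    rw [← map_inv]
    exact of_mul_good hAC (inv_mem ha) ih

theorem eq_empty_of_fstIdx_ne (hφ : ∀ i, Function.Injective (φ i)) {w : Word G}
    (hred : Reduced φ w) {i : ι} (hfst : w.fstIdx ≠ some i) {h : G i}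
    (heq : ofCoprodI w.prod = PushoutI.of (φ := φ) i h) : w = .empty := by
  by_cases hr : h ∈ (φ i).range
  · obtain ⟨y, rfl⟩ := hr
    exact hred.eq_empty_of_mem_range hφ ⟨y, by rw [heq, of_apply_eq_base]⟩
  · exfalso
    have h1 : h⁻¹ ≠ 1 := by
      rintro h1
      rw [inv_eq_one] at h1
      exact hr ⟨1, by rw [map_one, h1]⟩
    have hred' : Reduced φ (Word.cons h⁻¹ w hfst h1) := by
      intro g hg
      rw [toList_cons, List.mem_cons] at hg
      rcases hg with rfl | hg
      · rintro ⟨y, hy⟩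
        exact hr ⟨y⁻¹, by rw [map_inv, hy, inv_inv]⟩
      · exact hred g hg
    have := hred'.eq_empty_of_mem_range hφ ⟨1, by
      rw [map_one, Word.prod_cons, map_mul, ofCoprodI_of, heq, ← map_mul, inv_mul_cancel,
        map_one]⟩
    exact List.cons_ne_nil _ _ (congrArg Word.toList this)

theorem good_word_mem (hφ : ∀ i, Function.Injective (φ i)) (A : ∀ i, Subgroup (G i)) :
    ∀ (w : Word G), Reduced φ w → (∀ l ∈ w.toList, l.2 ∈ A l.1) →
      ∀ (i : ι) (g : G i), ofCoprodI w.prod = PushoutI.of (φ := φ) i g →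
        ofCoprodI w.prod ∈ (A i).map (PushoutI.of (φ := φ) i) := by
  intro w
  induction w using Word.consRecOn with
  | empty => intro _ _ i g _; rw [Word.prod_empty, map_one]; exact one_mem _
  | cons j m w h1 h2 _ =>
    intro hred hmem i g heq
    by_cases hji : j = i
    · subst hji
      have hw : ofCoprodI w.prod = PushoutI.of (φ := φ) j (m⁻¹ * g) := by
        rw [Word.prod_cons, map_mul, ofCoprodI_of] at heq
        rw [map_mul, map_inv, ← heq, ← mul_assoc, inv_mul_cancel, one_mul]
      have hwe : w = .empty := eq_empty_of_fstIdx_ne hφ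
        (fun l hl => hred l (by rw [toList_cons]; exact List.mem_cons_of_mem _ hl)) h1 hw
      subst hwe
      refine ⟨m, hmem ⟨j, m⟩ List.mem_cons_self, ?_⟩
      rw [Word.prod_cons, map_mul, ofCoprodI_of]
      simp
    · exfalso
      have : Word.cons m w h1 h2 = Word.empty := eq_empty_of_fstIdx_ne hφ hred
        (by rw [Word.fstIdx_cons]; simpa using hji) heq
      exact List.cons_ne_nil _ _ (congrArg Word.toList this)

theorem concrete (hφ : ∀ i, Function.Injective (φ i))
    (A : ∀ i, Subgroup (G i)) (C : Subgroup K)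
    (hAC : ∀ i (k : K), φ i k ∈ A i ↔ k ∈ C) (i : ι) :
    Subgroup.closure (⋃ j, ((PushoutI.of j : G j →* PushoutI φ) '' (A j) : Set (PushoutI φ)))
        ⊓ (PushoutI.of i).range = (A i).map (PushoutI.of i) := by
  apply le_antisymm
  · rintro x ⟨hx1, hx2⟩
    obtain ⟨w, c, hred, hmem, hc, rfl⟩ := good_of_mem_closure hAC hx1
    obtain ⟨h, hh⟩ := hx2
    have key : ofCoprodI w.prod = PushoutI.of (φ := φ) i (h * (φ i c)⁻¹) := by
      rw [map_mul, map_inv, of_apply_eq_base, hh, mul_assoc, mul_inv_cancel, mul_one]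
    have h1 : ofCoprodI w.prod ∈ (A i).map (PushoutI.of (φ := φ) i) :=
      good_word_mem hφ A w hred hmem i _ key
    have h2 : base φ c ∈ (A i).map (PushoutI.of (φ := φ) i) :=
      ⟨φ i c, (hAC i c).2 hc, of_apply_eq_base φ i c⟩

    exact mul_mem h1 h2
  · rintro x ⟨a, ha, rfl⟩
    exact ⟨Subgroup.subset_closure (Set.mem_iUnion.2 ⟨i, ⟨a, ha, rfl⟩⟩), ⟨a, rfl⟩⟩

/-! ### The two-group family -/

def Gf (G₁ G₂ : Type) : Bool → Type
  | true => G₁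
  | false => G₂

instance GfGroup (G₁ G₂ : Type) [Group G₁] [Group G₂] : ∀ b, Group (Gf G₁ G₂ b)
  | true => ‹Group G₁›
  | false => ‹Group G₂›

def φf {G₀ G₁ G₂ : Type} [Group G₀] [Group G₁] [Group G₂]
    (f₁ : G₀ →* G₁) (f₂ : G₀ →* G₂) : ∀ b, G₀ →* Gf G₁ G₂ b
  | true => f₁
  | false => f₂

def jf {G₁ G₂ G₃ : Type} [Group G₁] [Group G₂] [Group G₃]
    (j₁ : G₁ →* G₃) (j₂ : G₂ →* G₃) : ∀ b, Gf G₁ G₂ b →* G₃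
  | true => j₁
  | false => j₂

def Af {G₁ G₂ : Type} [Group G₁] [Group G₂]
    (A : Subgroup G₁) (B : Subgroup G₂) : ∀ b, Subgroup (Gf G₁ G₂ b)
  | true => A
  | false => B

end AmalgamAux

open AmalgamAux Monoid PushoutI in
/-- Subgroup compatibility of free amalgamation: in the pushout `G₃` of
`f₁ : G₀ →* G₁` and `f₂ : G₀ →* G₂`, if `A ≤ G₁` and `B ≤ G₂` satisfy
`A ∩ G₀ = B ∩ G₀ = C`, then the subgroup `H` of `G₃` generated by `A ∪ B`
meets `G₁` exactly in `A` and `G₂` exactly in `B`. -/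
theorem amalgam_generated_subgroup_intersection
    (G₀ G₁ G₂ G₃ : Type) [Group G₀] [Group G₁] [Group G₂] [Group G₃]
    (f₁ : G₀ →* G₁) (f₂ : G₀ →* G₂)
    (hf₁ : Function.Injective f₁) (hf₂ : Function.Injective f₂)
    (j₁ : G₁ →* G₃) (j₂ : G₂ →* G₃)
    (hcomm : j₁.comp f₁ = j₂.comp f₂)
    (huniv : ∀ (G' : Type) [Group G'] (k₁ : G₁ →* G') (k₂ : G₂ →* G'),
      k₁.comp f₁ = k₂.comp f₂ →
      ∃! k : G₃ →* G', k.comp j₁ = k₁ ∧ k.comp j₂ = k₂)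
    (A : Subgroup G₁) (B : Subgroup G₂) (C : Subgroup G₀)
    (hA : ∀ a : G₀, f₁ a ∈ A ↔ a ∈ C)
    (hB : ∀ a : G₀, f₂ a ∈ B ↔ a ∈ C)
    (H : Subgroup G₃)
    (hH : H = Subgroup.closure ((A.map j₁ : Subgroup G₃) ∪ (B.map j₂ : Subgroup G₃) : Set G₃)) :
    H ⊓ j₁.range = A.map j₁ ∧ H ⊓ j₂.range = B.map j₂ := by
  classical
  set φ : ∀ b, G₀ →* Gf G₁ G₂ b := φf f₁ f₂ with hφdef
  have hφ : ∀ b, Function.Injective (φ b) := by rintro (_ | _); exacts [hf₂, hf₁]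
  -- the map from G₃ to the concrete pushout
  have hofcomm : (of (φ := φ) true).comp f₁ = (of (φ := φ) false).comp f₂ :=
    (of_comp_eq_base (φ := φ) true).trans (of_comp_eq_base (φ := φ) false).symm
  obtain ⟨k, ⟨hk₁, hk₂⟩, -⟩ := huniv (PushoutI φ) (of (φ := φ) true) (of (φ := φ) false) hofcomm
  -- the map back
  have hjf : ∀ b, (jf j₁ j₂ b).comp (φ b) = j₁.comp f₁ := by
    rintro (_ | _)
    · exact hcomm.symm
    · rfl
  set l : PushoutI φ →* G₃ := PushoutI.lift (jf j₁ j₂) (j₁.comp f₁) hjf with hldef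
  have hl₁ : l.comp (of (φ := φ) true) = j₁ := MonoidHom.ext fun g => lift_of (jf j₁ j₂) (j₁.comp f₁) hjf g
  have hl₂ : l.comp (of (φ := φ) false) = j₂ := MonoidHom.ext fun g => lift_of (jf j₁ j₂) (j₁.comp f₁) hjf g
  -- l ∘ k = id
  have hlk : l.comp k = MonoidHom.id G₃ := by
    obtain ⟨m, -, hmu⟩ := huniv G₃ j₁ j₂ hcomm
    have e1 : l.comp k = m := hmu _ ⟨by rw [MonoidHom.comp_assoc, hk₁]; exact hl₁,
      by rw [MonoidHom.comp_assoc, hk₂]; exact hl₂⟩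
    have e2 : MonoidHom.id G₃ = m := hmu _ ⟨MonoidHom.id_comp _, MonoidHom.id_comp _⟩
    rw [e1, e2]
  have hlk' : ∀ x, l (k x) = x := fun x => by simpa using DFunLike.congr_fun hlk x
  have hkinj : Function.Injective k := Function.LeftInverse.injective hlk'
  have hk₁' : ∀ a, k (j₁ a) = of (φ := φ) true a := fun a => by
    exact DFunLike.congr_fun hk₁ a
  have hk₂' : ∀ b, k (j₂ b) = of (φ := φ) false b := fun b => by
    exact DFunLike.congr_fun hk₂ b
  have hAC : ∀ b (c : G₀), φ b c ∈ Af A B b ↔ c ∈ C := by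
    rintro (_ | _) c
    · exact hB c
    · exact hA c
  have hconc := fun i => concrete hφ (Af A B) C hAC i
  -- transfer
  have himage : k '' ((A.map j₁ : Subgroup G₃) ∪ (B.map j₂) : Set G₃)
      = ⋃ b, ((of b : Gf G₁ G₂ b →* PushoutI φ) '' (Af A B b) : Set (PushoutI φ)) := by
    ext x
    simp only [Set.mem_image, Set.mem_iUnion, Set.mem_union, Subgroup.coe_map]
    constructor
    · rintro ⟨y, (⟨a, ha, rfl⟩ | ⟨b, hb, rfl⟩), rfl⟩
      · exact ⟨true, a, ha, (hk₁' a).symm⟩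
      · exact ⟨false, b, hb, (hk₂' b).symm⟩
    · rintro (⟨(_ | _), a, ha, rfl⟩)
      · exact ⟨j₂ a, Or.inr ⟨a, ha, rfl⟩, hk₂' a⟩
      · exact ⟨j₁ a, Or.inl ⟨a, ha, rfl⟩, hk₁' a⟩
  have hmapH : H.map k = Subgroup.closure
      (⋃ b, ((of b : Gf G₁ G₂ b →* PushoutI φ) '' (Af A B b) : Set (PushoutI φ))) := by
    rw [hH, MonoidHom.map_closure, himage]
  constructor
  · apply Subgroup.map_injective hkinj
    rw [Subgroup.map_inf _ _ _ hkinj, hmapH, MonoidHom.map_range, hk₁]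
    erw [hconc true]
    rw [Subgroup.map_map, hk₁]
    rfl
  · apply Subgroup.map_injective hkinj
    rw [Subgroup.map_inf _ _ _ hkinj, hmapH, MonoidHom.map_range, hk₂]
    erw [hconc false]
    rw [Subgroup.map_map, hk₂]
    rfl
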